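/- Let m ≥ 0, E > 0, and let u = (u₁,u₂) : [−1,1] → ℂ² be continuously differentiable, not identically zero, satisfy the infinite mass boundary conditions, and satisfy −u₂′(t) + m·u₁(t) = E·u₁(t) and u₁′(t) − m·u₂(t) = E·u₂(t) for all t ∈ [−1,1]. Then E² > m², and setting k = √(E² − m²) there holds m·sin(2k) + k·cos(2k) = 0 and there exists a complex constant c such that u₁(t) = c·(k·cos(k(t+1)) + (E+m)·sin(k(t+1))) and u₂(t) = c·(k·cos(k(t+1)) − (E−m)·sin(k(t+1))) for all t ∈ [−1,1]. -/

import Mathlib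

open MeasureTheory Set

private lemma aux_Ici {F : Type*} [NormedAddCommGroup F] [NormedSpace ℝ F]
    {f : ℝ → F} {f' : F} {a b t : ℝ} (ht : t ∈ Ico a b)
    (h : HasDerivWithinAt f f' (Icc a b) t) : HasDerivWithinAt f f' (Ici t) t :=
  h.mono_of_mem_nhdsWithin (Icc_mem_nhdsGE_of_mem ht)

private lemma ode_unique (α β : ℂ) {f g : ℝ → ℂ × ℂ} {a b : ℝ}
    (hf : ∀ t ∈ Icc a b, HasDerivWithinAt f (α * (f t).2, β * (f t).1) (Icc a b) t)
    (hg : ∀ t ∈ Icc a b, HasDerivWithinAt g (α * (g t).2, β * (g t).1) (Icc a b) t)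
    (hab : f a = g a) : EqOn f g (Icc a b) := by
  set L : ℂ × ℂ →L[ℂ] ℂ × ℂ :=
    (α • ContinuousLinearMap.snd ℂ ℂ ℂ).prod (β • ContinuousLinearMap.fst ℂ ℂ ℂ) with hL
  have hLapp : ∀ p : ℂ × ℂ, L p = (α * p.2, β * p.1) := fun p => by
    simp [hL, smul_eq_mul]
  refine ODE_solution_unique (v := fun _ p => L p) (K := ‖L‖₊)
    (fun _ => L.lipschitz) (fun t ht => (hf t ht).continuousWithinAt) ?_
    (fun t ht => (hg t ht).continuousWithinAt) ?_ hab
  · intro t ht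
    show HasDerivWithinAt f (L (f t)) (Ici t) t
    rw [hLapp]
    exact aux_Ici ht (hf t (Ico_subset_Icc_self ht))
  · intro t ht
    show HasDerivWithinAt g (L (g t)) (Ici t) t
    rw [hLapp]
    exact aux_Ici ht (hg t (Ico_subset_Icc_self ht))

/-- If `E > 0` is an eigenvalue of the transverse Dirac operator `T(m)`
with infinite mass boundary conditions, with nontrivial continuously differentiable
eigenfunction `u`, then `E² > m²`, the number `k = √(E² − m²)` satisfies
`m·sin(2k) + k·cos(2k) = 0`, and `u` is a multiple of the explicit eigenfunction. -/
theorem transverse_eigenfunction_classification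
    (m E : ℝ) (hm : 0 ≤ m) (hE : 0 < E) (u₁ u₂ u₁' u₂' : ℝ → ℂ)
    (hu₁ : ∀ t ∈ Icc (-1 : ℝ) 1, HasDerivWithinAt u₁ (u₁' t) (Icc (-1 : ℝ) 1) t)
    (hu₂ : ∀ t ∈ Icc (-1 : ℝ) 1, HasDerivWithinAt u₂ (u₂' t) (Icc (-1 : ℝ) 1) t)
    (hc₁ : ContinuousOn u₁' (Icc (-1 : ℝ) 1))
    (hc₂ : ContinuousOn u₂' (Icc (-1 : ℝ) 1))
    (hne : ∃ t ∈ Icc (-1 : ℝ) 1, ¬(u₁ t = 0 ∧ u₂ t = 0))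
    (hbc1 : u₂ 1 = -u₁ 1) (hbc2 : u₂ (-1) = u₁ (-1))
    (heig : ∀ t ∈ Icc (-1 : ℝ) 1,
      -u₂' t + (m : ℂ) * u₁ t = (E : ℂ) * u₁ t ∧
      u₁' t - (m : ℂ) * u₂ t = (E : ℂ) * u₂ t) :
    m ^ 2 < E ^ 2 ∧
    m * Real.sin (2 * Real.sqrt (E ^ 2 - m ^ 2))
      + Real.sqrt (E ^ 2 - m ^ 2) * Real.cos (2 * Real.sqrt (E ^ 2 - m ^ 2)) = 0 ∧
    ∃ c : ℂ, ∀ t ∈ Icc (-1 : ℝ) 1,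
      u₁ t = c * ((Real.sqrt (E ^ 2 - m ^ 2) * Real.cos (Real.sqrt (E ^ 2 - m ^ 2) * (t + 1))
        + (E + m) * Real.sin (Real.sqrt (E ^ 2 - m ^ 2) * (t + 1)) : ℝ) : ℂ) ∧
      u₂ t = c * ((Real.sqrt (E ^ 2 - m ^ 2) * Real.cos (Real.sqrt (E ^ 2 - m ^ 2) * (t + 1))
        - (E - m) * Real.sin (Real.sqrt (E ^ 2 - m ^ 2) * (t + 1)) : ℝ) : ℂ) := by
  have hm1 : (-1 : ℝ) ∈ Icc (-1 : ℝ) 1 := left_mem_Icc.2 (by norm_num)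
  have hp1 : (1 : ℝ) ∈ Icc (-1 : ℝ) 1 := right_mem_Icc.2 (by norm_num)
  -- the first-order form of the eigenvalue equations
  have hode₁ : ∀ t ∈ Icc (-1 : ℝ) 1, u₁' t = ((E : ℂ) + m) * u₂ t := fun t ht => by
    linear_combination (heig t ht).2
  have hode₂ : ∀ t ∈ Icc (-1 : ℝ) 1, u₂' t = ((m : ℂ) - E) * u₁ t := fun t ht => by
    linear_combination -(heig t ht).1
  -- Part 1 : m² < E²
  have hEm : m ^ 2 < E ^ 2 := by
    by_contra hcon
    push_neg at hcon
    have hme : E ≤ m := by nlinarith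
    set φ : ℝ → ℝ := fun t => (star (u₁ t) * u₂ t).re with hφdef
    have hφd : ∀ t ∈ Icc (-1 : ℝ) 1, HasDerivWithinAt φ
        ((E + m) * Complex.normSq (u₂ t) + (m - E) * Complex.normSq (u₁ t))
        (Icc (-1 : ℝ) 1) t := by
      intro t ht
      have h1 := ((hu₁ t ht).star.mul (hu₂ t ht))
      have h2 := Complex.reCLM.hasFDerivAt.comp_hasDerivWithinAt t h1
      refine h2.congr_deriv (Eq.symm ?_)
      rw [hode₁ t ht, hode₂ t ht]
      simp only [Complex.reCLM_apply, Complex.add_re, Complex.mul_re, Complex.star_def,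
        Complex.conj_re, Complex.conj_im, Complex.normSq_apply, Complex.sub_re,
        Complex.sub_im, Complex.add_im, Complex.mul_im, Complex.ofReal_re, Complex.ofReal_im]
      ring
    have hφc : ContinuousOn φ (Icc (-1 : ℝ) 1) := fun t ht => (hφd t ht).continuousWithinAt
    have hmono : MonotoneOn φ (Icc (-1 : ℝ) 1) := by
      apply monotoneOn_of_deriv_nonneg (convex_Icc _ _) hφc
      · intro x hx
        rw [interior_Icc] at hx
        exact ((hφd x (Ioo_subset_Icc_self hx)).hasDerivAt
          (Icc_mem_nhds hx.1 hx.2)).differentiableAt.differentiableWithinAt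
      · intro x hx
        rw [interior_Icc] at hx
        rw [((hφd x (Ioo_subset_Icc_self hx)).hasDerivAt (Icc_mem_nhds hx.1 hx.2)).deriv]
        have n1 := Complex.normSq_nonneg (u₁ x)
        have n2 := Complex.normSq_nonneg (u₂ x)
        nlinarith
    have hφm1 : φ (-1) = Complex.normSq (u₁ (-1)) := by
      simp only [hφdef, hbc2, Complex.mul_re, Complex.star_def, Complex.conj_re,
        Complex.conj_im, Complex.normSq_apply]
      ring
    have hφp1 : φ 1 = -Complex.normSq (u₁ 1) := by
      simp only [hφdef, hbc1, Complex.mul_re, Complex.star_def, Complex.conj_re,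
        Complex.conj_im, Complex.normSq_apply, Complex.neg_re, Complex.neg_im]
      ring
    have hle := hmono hm1 hp1 (by norm_num)
    have n1 := Complex.normSq_nonneg (u₁ (-1))
    have n2 := Complex.normSq_nonneg (u₁ 1)
    have hz1 : Complex.normSq (u₁ (-1)) = 0 := by rw [hφm1, hφp1] at hle; linarith
    have hz2 : Complex.normSq (u₁ 1) = 0 := by rw [hφm1, hφp1] at hle; linarith
    have hφ0 : ∀ t ∈ Icc (-1 : ℝ) 1, φ t = 0 := by
      intro t ht
      have a1 := hmono hm1 ht ht.1
      have a2 := hmono ht hp1 ht.2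
      rw [hφm1, hz1] at a1
      rw [hφp1, hz2] at a2
      simp at a2
      linarith
    have hval0 : ∀ t ∈ Icc (-1 : ℝ) 1,
        (E + m) * Complex.normSq (u₂ t) + (m - E) * Complex.normSq (u₁ t) = 0 := by
      intro t ht
      have hU : UniqueDiffWithinAt ℝ (Icc (-1 : ℝ) 1) t :=
        (uniqueDiffOn_Icc (by norm_num : (-1 : ℝ) < 1)) t ht
      have hz : HasDerivWithinAt (fun _ : ℝ => (0 : ℝ))
          ((E + m) * Complex.normSq (u₂ t) + (m - E) * Complex.normSq (u₁ t))
          (Icc (-1 : ℝ) 1) t :=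
        (hφd t ht).congr (fun y hy => (hφ0 y hy).symm) (hφ0 t ht).symm
      have e1 := hz.derivWithin hU
      have e2 := (hasDerivWithinAt_const t (Icc (-1 : ℝ) 1) (0 : ℝ)).derivWithin hU
      rw [← e1, e2]
    have hu₂0 : ∀ t ∈ Icc (-1 : ℝ) 1, u₂ t = 0 := by
      intro t ht
      rw [← Complex.normSq_eq_zero]
      have n1 := Complex.normSq_nonneg (u₁ t)
      have n2 := Complex.normSq_nonneg (u₂ t)
      have := hval0 t ht
      nlinarith
    have hu₁c : ∀ t ∈ Icc (-1 : ℝ) 1, u₁ t = u₁ (-1) := by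
      apply constant_of_has_deriv_right_zero (fun t ht => (hu₁ t ht).continuousWithinAt)
      intro x hx
      have hx' := Ico_subset_Icc_self hx
      have h0 : u₁' x = 0 := by rw [hode₁ x hx', hu₂0 x hx']; ring
      exact h0 ▸ aux_Ici hx (hu₁ x hx')
    obtain ⟨t, ht, hnt⟩ := hne
    refine hnt ⟨?_, hu₂0 t ht⟩
    rw [hu₁c t ht, ← Complex.normSq_eq_zero.mp hz1]
  refine ⟨hEm, ?_⟩
  -- Part 2 : the explicit solution
  set k : ℝ := Real.sqrt (E ^ 2 - m ^ 2) with hkdef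
  have hk2 : k ^ 2 = E ^ 2 - m ^ 2 := Real.sq_sqrt (by linarith)
  have hkpos : 0 < k := Real.sqrt_pos.2 (by linarith)
  set c : ℂ := u₁ (-1) / (k : ℂ) with hcdef
  set V₁ : ℝ → ℝ := fun t => k * Real.cos (k * (t + 1)) + (E + m) * Real.sin (k * (t + 1))
    with hV₁def
  set V₂ : ℝ → ℝ := fun t => k * Real.cos (k * (t + 1)) - (E - m) * Real.sin (k * (t + 1))
    with hV₂def
  have hlin : ∀ t : ℝ, HasDerivAt (fun t : ℝ => k * (t + 1)) k t := fun t => by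
    simpa using ((hasDerivAt_id t).add_const 1).const_mul k
  have hV₁d : ∀ t : ℝ, HasDerivAt V₁ ((E + m) * V₂ t) t := by
    intro t
    have hc' := ((Real.hasDerivAt_cos (k * (t + 1))).comp t (hlin t)).const_mul k
    have hs' := ((Real.hasDerivAt_sin (k * (t + 1))).comp t (hlin t)).const_mul (E + m)
    have := hc'.add hs'
    refine this.congr_deriv (Eq.symm ?_)
    simp only [hV₂def, Function.comp]
    linear_combination Real.sin (k * (t + 1)) * hk2
  have hV₂d : ∀ t : ℝ, HasDerivAt V₂ ((m - E) * V₁ t) t := by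
    intro t
    have hc' := ((Real.hasDerivAt_cos (k * (t + 1))).comp t (hlin t)).const_mul k
    have hs' := ((Real.hasDerivAt_sin (k * (t + 1))).comp t (hlin t)).const_mul (E - m)
    have := hc'.sub hs'
    refine this.congr_deriv (Eq.symm ?_)
    simp only [hV₁def, Function.comp]
    linear_combination Real.sin (k * (t + 1)) * hk2
  set F : ℝ → ℂ × ℂ := fun t => (u₁ t, u₂ t) with hFdef
  set G : ℝ → ℂ × ℂ := fun t => (c * (V₁ t : ℂ), c * (V₂ t : ℂ)) with hGdef
  have hFd : ∀ t ∈ Icc (-1 : ℝ) 1, HasDerivWithinAt F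
      (((E : ℂ) + m) * (F t).2, ((m : ℂ) - E) * (F t).1) (Icc (-1 : ℝ) 1) t := by
    intro t ht
    have := (hu₁ t ht).prodMk (hu₂ t ht)
    rwa [hode₁ t ht, hode₂ t ht] at this
  have hGd : ∀ t ∈ Icc (-1 : ℝ) 1, HasDerivWithinAt G
      (((E : ℂ) + m) * (G t).2, ((m : ℂ) - E) * (G t).1) (Icc (-1 : ℝ) 1) t := by
    intro t _
    have h1 : HasDerivAt (fun t => c * (V₁ t : ℂ)) (c * ((E + m) * V₂ t : ℝ)) t :=
      ((hV₁d t).ofReal_comp).const_mul c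
    have h2 : HasDerivAt (fun t => c * (V₂ t : ℂ)) (c * ((m - E) * V₁ t : ℝ)) t :=
      ((hV₂d t).ofReal_comp).const_mul c
    have := (h1.prodMk h2).hasDerivWithinAt (s := Icc (-1 : ℝ) 1)
    refine this.congr_deriv (Eq.symm (Prod.ext ?_ ?_))
    · show ((E : ℂ) + m) * (c * (V₂ t : ℂ)) = c * ((E + m) * V₂ t : ℝ)
      push_cast
      ring
    · show ((m : ℂ) - E) * (c * (V₁ t : ℂ)) = c * ((m - E) * V₁ t : ℝ)
      push_cast
      ring
  have hinit : F (-1) = G (-1) := by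
    have hz : k * (-1 + 1) = 0 := by ring
    have hV₁m1 : V₁ (-1) = k := by simp [hV₁def, hz]
    have hV₂m1 : V₂ (-1) = k := by simp [hV₂def, hz]
    have hkne : (k : ℂ) ≠ 0 := by exact_mod_cast hkpos.ne'
    simp only [hFdef, hGdef, hV₁m1, hV₂m1, hcdef, Prod.mk.injEq]
    constructor
    · field_simp
    · rw [hbc2]; field_simp
  have heqFG := ode_unique ((E : ℂ) + m) ((m : ℂ) - E) hFd hGd hinit
  have hcomp : ∀ t ∈ Icc (-1 : ℝ) 1, u₁ t = c * (V₁ t : ℂ) ∧ u₂ t = c * (V₂ t : ℂ) := by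
    intro t ht
    have := heqFG ht
    rw [hFdef, hGdef] at this
    exact ⟨congrArg Prod.fst this, congrArg Prod.snd this⟩
  have hcne : c ≠ 0 := by
    intro hc0
    obtain ⟨t, ht, hnt⟩ := hne
    obtain ⟨e1, e2⟩ := hcomp t ht
    rw [hc0, zero_mul] at e1 e2
    exact hnt ⟨e1, e2⟩
  refine ⟨?_, c, fun t ht => hcomp t ht⟩
  -- the secular equation
  have h2k : k * (1 + 1) = 2 * k := by ring
  obtain ⟨e1, e2⟩ := hcomp 1 hp1
  rw [hbc1, e1] at e2
  have hsum : ((V₁ 1 + V₂ 1 : ℝ) : ℂ) = 0 := by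
    have hc2 : c * ((V₁ 1 + V₂ 1 : ℝ) : ℂ) = 0 := by push_cast; linear_combination -e2
    exact (mul_eq_zero.mp hc2).resolve_left hcne
  have hsumR : V₁ 1 + V₂ 1 = 0 := by exact_mod_cast hsum
  simp only [hV₁def, hV₂def] at hsumR
  rw [h2k] at hsumR
  linarith
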